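/- Suppose T is a very thin Λ-tree, i.e., Λ is width(T)⁺-directed where width(T) is the least cardinal μ with |T_u| < μ for all u ∈ Λ. Then T has a cofinal branch: a function b ∈ ∏_{u ∈ Λ} T_u such that b(u) <_T b(v) whenever u <_Λ v. -/

import Mathlib

open Cardinal

universe u

/-- A `Λ`-tree: a family of nonempty pairwise disjoint levels indexed by a partial order `Λ`,
with a transitive tree-like ordering `lt` respecting the levels and admitting unique
restrictions. -/
structure LamTree (Λ : Type u) [PartialOrder Λ] (α : Type u) where
  lev : Λ → Set α
  lt : α → α → Prop
  nonempty : ∀ u : Λ, (lev u).Nonempty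
  disj : ∀ u v : Λ, u ≠ v → Disjoint (lev u) (lev v)
  trans : ∀ {a b c : α}, lt a b → lt b c → lt a c
  respects : ∀ {u v : Λ} {s t : α}, s ∈ lev u → t ∈ lev v → lt s t → u < v
  treelike : ∀ {u v w : Λ} {r s t : α}, u < v → v < w → r ∈ lev u → s ∈ lev v → t ∈ lev w →
    lt r t → lt s t → lt r s
  restrict : ∀ {u v : Λ} (t : α), u ≤ v → t ∈ lev v → ∃! s : α, s ∈ lev u ∧ (lt s t ∨ s = t)

/-- `Λ` is `κ`-directed: every subset of size `< κ` has an upper bound. -/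
def DirectedBelow (κ : Cardinal.{u}) (Λ : Type u) [PartialOrder Λ] : Prop :=
  ∀ S : Set Λ, #S < κ → ∃ ub : Λ, ∀ u ∈ S, u ≤ ub


namespace LamTree

variable {Λ α : Type u} [PartialOrder Λ]

open Classical in
noncomputable def rtr (T : LamTree Λ α) (u : Λ) (t : α) : α :=
  if h : ∃ v, u ≤ v ∧ t ∈ T.lev v then
    (T.restrict t h.choose_spec.1 h.choose_spec.2).exists.choose
  else t

variable {T : LamTree Λ α} {u v w : Λ} {s t : α}

theorem rtr_spec (huv : u ≤ v) (ht : t ∈ T.lev v) :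
    T.rtr u t ∈ T.lev u ∧ (T.lt (T.rtr u t) t ∨ T.rtr u t = t) := by
  have h : ∃ v, u ≤ v ∧ t ∈ T.lev v := ⟨v, huv, ht⟩
  classical
  rw [rtr]
  rw [dif_pos h]
  exact (T.restrict t h.choose_spec.1 h.choose_spec.2).exists.choose_spec

theorem mem_rtr (huv : u ≤ v) (ht : t ∈ T.lev v) : T.rtr u t ∈ T.lev u :=
  (rtr_spec huv ht).1

theorem rtr_unique (huv : u ≤ v) (ht : t ∈ T.lev v) {y : α}
    (hy : y ∈ T.lev u) (hlt : T.lt y t ∨ y = t) : y = T.rtr u t := by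
  obtain ⟨s', _, hs'⟩ := T.restrict t huv ht
  exact (hs' y ⟨hy, hlt⟩).trans (hs' _ ⟨(rtr_spec huv ht).1, (rtr_spec huv ht).2⟩).symm

theorem level_eq (hu : t ∈ T.lev u) (hv : t ∈ T.lev v) : u = v := by
  by_contra hne
  exact Set.disjoint_left.1 (T.disj u v hne) hu hv

theorem rtr_self (ht : t ∈ T.lev u) : T.rtr u t = t :=
  (rtr_unique le_rfl ht ht (Or.inr rfl)).symm

theorem rtr_rtr (huv : u ≤ v) (hvw : v ≤ w) (ht : t ∈ T.lev w) :
    T.rtr u (T.rtr v t) = T.rtr u t := by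
  have hs := rtr_spec (huv.trans hvw) ht
  have hr := rtr_spec hvw ht
  refine (rtr_unique huv hr.1 hs.1 ?_).symm
  rcases hs.2 with hst | hst <;> rcases hr.2 with hrt | hrt
  · by_cases h : u = v
    · subst h
      exact Or.inr rfl
    · have huv' : u < v := lt_of_le_of_ne huv h
      have hvw' : v < w := T.respects hr.1 ht hrt
      exact Or.inl (T.treelike huv' hvw' hs.1 hr.1 ht hst hrt)
  · exact Or.inl (by rw [hrt]; exact hst)
  · exfalso
    have huw : u = w := level_eq (hst ▸ hs.1) ht
    exact (T.respects hr.1 ht hrt : v < w).not_ge (huw ▸ huv)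
  · exact Or.inr (hst.trans hrt.symm)

theorem rtr_lt (huv : u < v) (ht : t ∈ T.lev v) : T.lt (T.rtr u t) t := by
  rcases (rtr_spec huv.le ht).2 with h | h
  · exact h
  · exact absurd (level_eq (h ▸ mem_rtr huv.le ht) ht) huv.ne

end LamTree
section Pers

variable {Λ α : Type u} [PartialOrder Λ] {T : LamTree Λ α} {μ : Cardinal.{u}}
  {u v w : Λ} {s t : α}

open LamTree

/-- `s` is a persistent element of level `u`: it has preimages under restriction from every
higher level. -/
def Pers (T : LamTree Λ α) (u : Λ) (s : α) : Prop :=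
  s ∈ T.lev u ∧ ∀ v, u ≤ v → ∃ t ∈ T.lev v, T.rtr u t = s

section withDir

variable (hwidth : ∀ u : Λ, #(T.lev u) < μ) (hdir : DirectedBelow (Order.succ μ) Λ)
include hwidth hdir

theorem exists_ub {S : Set Λ} (hS : #S ≤ μ) : ∃ w, ∀ u ∈ S, u ≤ w :=
  hdir S (hS.trans_lt (Order.lt_succ μ))

theorem nonempty_lam : Nonempty Λ := by
  obtain ⟨w, -⟩ := hdir ∅ (by
    rw [Cardinal.mk_emptyCollection]
    exact (zero_le : (0 : Cardinal.{u}) ≤ μ).trans_lt (Order.lt_succ μ))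
  exact ⟨w⟩

theorem add_one_le_mu {a : Cardinal.{u}} (h : a < μ) : a + 1 ≤ μ :=
  (Cardinal.add_one_le_succ a).trans (Order.succ_le_of_lt h)

theorem card_insert_range_le {x : Λ} {ι : Type u} (f : ι → Λ) :
    #(insert x (Set.range f) : Set Λ) ≤ #ι + 1 :=
  Cardinal.mk_insert_le.trans (add_le_add_left Cardinal.mk_range_le 1)

theorem exists_ub_pair (a b : Λ) : ∃ w, a ≤ w ∧ b ≤ w := by
  have h1 : (1 : Cardinal.{u}) < μ := by
    obtain ⟨u⟩ := nonempty_lam hwidth hdir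
    haveI := (T.nonempty u).to_subtype
    exact lt_of_le_of_lt (Cardinal.one_le_iff_ne_zero.2 (Cardinal.mk_ne_zero _)) (hwidth u)
  obtain ⟨w, hw⟩ := exists_ub hwidth hdir (S := insert a (Set.range fun _ : PUnit => b))
    ((card_insert_range_le hwidth hdir _).trans (by
      rw [Cardinal.mk_punit]
      exact add_one_le_mu hwidth hdir h1))
  exact ⟨w, hw a (Set.mem_insert _ _), hw b (Set.mem_insert_of_mem _ ⟨PUnit.unit, rfl⟩)⟩

theorem pers_exists (u : Λ) : ∃ s, Pers T u s := by
  by_contra hcon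
  push_neg at hcon
  have key : ∀ s : T.lev u, ∃ v, u ≤ v ∧ ∀ t ∈ T.lev v, T.rtr u t ≠ (s : α) := by
    intro s
    have := hcon s
    rw [Pers] at this
    push_neg at this
    obtain ⟨v, hv, h⟩ := this s.2
    exact ⟨v, hv, h⟩
  choose f hf1 hf2 using key
  obtain ⟨w, hw⟩ := exists_ub hwidth hdir (S := insert u (Set.range f))
    ((card_insert_range_le hwidth hdir _).trans (add_one_le_mu hwidth hdir (hwidth u)))
  have huw : u ≤ w := hw u (Set.mem_insert _ _)
  obtain ⟨t₀, ht₀⟩ := T.nonempty w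
  set s : α := T.rtr u t₀ with hs
  have hsu : s ∈ T.lev u := mem_rtr huw ht₀
  have hvw : f ⟨s, hsu⟩ ≤ w := hw _ (Set.mem_insert_of_mem _ ⟨⟨s, hsu⟩, rfl⟩)
  refine hf2 ⟨s, hsu⟩ (T.rtr (f ⟨s, hsu⟩) t₀) (mem_rtr hvw ht₀) ?_
  exact rtr_rtr (hf1 ⟨s, hsu⟩) hvw ht₀

theorem pers_rtr (hp : Pers T v s) (huv : u ≤ v) : Pers T u (T.rtr u s) := by
  refine ⟨mem_rtr huv hp.1, fun w huw => ?_⟩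
  obtain ⟨w', hvw', hww'⟩ := exists_ub_pair hwidth hdir v w
  obtain ⟨t, htw', hts⟩ := hp.2 w' hvw'
  refine ⟨T.rtr w t, mem_rtr hww' htw', ?_⟩
  rw [rtr_rtr huw hww' htw', ← rtr_rtr huv hvw' htw']
  rw [hts]

theorem pers_lift (hp : Pers T u s) (huv : u ≤ v) :
    ∃ r, Pers T v r ∧ T.rtr u r = s := by
  classical
  set Bad : Set α := {r | r ∈ T.lev v ∧ ∃ w, v ≤ w ∧ ∀ t ∈ T.lev w, T.rtr v t ≠ r} with hBad
  have key : ∀ r : Bad, ∃ w, v ≤ w ∧ ∀ t ∈ T.lev w, T.rtr v t ≠ (r : α) := fun r => r.2.2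
  choose f hf1 hf2 using key
  have hcard : #Bad ≤ #(T.lev v) := Cardinal.mk_le_mk_of_subset (fun r hr => hr.1)
  obtain ⟨w₀, hw₀⟩ := exists_ub hwidth hdir (S := insert v (Set.range f))
    ((card_insert_range_le hwidth hdir _).trans
      (add_one_le_mu hwidth hdir (hcard.trans_lt (hwidth v))))
  have hvw₀ : v ≤ w₀ := hw₀ v (Set.mem_insert _ _)
  obtain ⟨t, htw₀, hts⟩ := hp.2 w₀ (huv.trans hvw₀)
  set r : α := T.rtr v t with hr
  have hrv : r ∈ T.lev v := mem_rtr hvw₀ htw₀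
  have hru : T.rtr u r = s := by rw [hr, rtr_rtr huv hvw₀ htw₀, hts]
  refine ⟨r, ⟨hrv, ?_⟩, hru⟩
  intro w' hvw'
  by_contra hcon
  push_neg at hcon
  have hrBad : r ∈ Bad := ⟨hrv, w', hvw', fun t' ht' => hcon t' ht'⟩
  have hfw : f ⟨r, hrBad⟩ ≤ w₀ := hw₀ _ (Set.mem_insert_of_mem _ ⟨⟨r, hrBad⟩, rfl⟩)
  exact hf2 ⟨r, hrBad⟩ (T.rtr (f ⟨r, hrBad⟩) t) (mem_rtr hfw htw₀)
    (rtr_rtr (hf1 _) hfw htw₀)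

end withDir
end Pers

open LamTree CategoryTheory

/-- A very thin `Λ`-tree (one whose width `μ` satisfies that `Λ` is `μ⁺`-directed)
has a cofinal branch. -/
theorem stmt2 {Λ α : Type u} [PartialOrder Λ] (μ : Cardinal.{u}) (T : LamTree Λ α)
    (hwidth : ∀ u : Λ, #(T.lev u) < μ)
    (hleast : ∀ μ' : Cardinal.{u}, (∀ u : Λ, #(T.lev u) < μ') → μ ≤ μ')
    (hdir : DirectedBelow (Order.succ μ) Λ) :
    ∃ b : Λ → α, (∀ u : Λ, b u ∈ T.lev u) ∧ ∀ u v : Λ, u < v → T.lt (b u) (b v) := by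
  classical
  haveI hΛ : Nonempty Λ := nonempty_lam hwidth hdir
  by_cases hfin : ∀ u : Λ, (T.lev u).Finite
  · -- all levels finite: use compactness of cofiltered limits of finite sets
    haveI : IsDirected Λ (· ≤ ·) := ⟨fun a b => by
      obtain ⟨w, h1, h2⟩ := exists_ub_pair hwidth hdir a b
      exact ⟨w, h1, h2⟩⟩
    let F : Λᵒᵖ ⥤ Type u :=
      { obj := fun X => ↥(T.lev X.unop)
        map := fun {X Y} f => TypeCat.ofHom fun t => ⟨T.rtr Y.unop t.1, mem_rtr (leOfHom f.unop) t.2⟩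
        map_id := fun X => by ext t; exact rtr_self t.2
        map_comp := fun {X Y Z} f g => by
          ext t
          exact (rtr_rtr (leOfHom g.unop) (leOfHom f.unop) t.2).symm }
    haveI : ∀ j : Λᵒᵖ, Finite (F.obj j) := fun j => (hfin j.unop).to_subtype
    haveI : ∀ j : Λᵒᵖ, Nonempty (F.obj j) := fun j => (T.nonempty j.unop).to_subtype
    obtain ⟨sec, hsec⟩ := nonempty_sections_of_finite_cofiltered_system F
    refine ⟨fun u => (sec (Opposite.op u)).1, fun u => (sec (Opposite.op u)).2,
      fun u v huv => ?_⟩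
    have h := hsec ((homOfLE huv.le).op : Opposite.op v ⟶ Opposite.op u)
    have hv : (T.rtr u (sec (Opposite.op v)).1) = (sec (Opposite.op u)).1 :=
      congrArg Subtype.val h
    show T.lt (sec (Opposite.op u)).1 (sec (Opposite.op v)).1
    rw [← hv]
    exact rtr_lt huv (sec (Opposite.op v)).2
  · -- some level is infinite, so `ℵ₀ < μ`
    push_neg at hfin
    obtain ⟨u₁, hu₁⟩ := hfin
    have hu₁' : (T.lev u₁).Infinite := hu₁
    haveI := hu₁'.to_subtype
    have haleph : ℵ₀ < μ := lt_of_le_of_lt (Cardinal.aleph0_le_mk _) (hwidth u₁)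
    by_cases hG : ∃ u₀ : Λ, ∀ v, u₀ ≤ v → ∀ r r', Pers T v r → Pers T v r' →
        T.rtr u₀ r = T.rtr u₀ r' → r = r'
    · -- restriction to `u₀` is injective on persistent elements: build the branch
      obtain ⟨u₀, hinj⟩ := hG
      obtain ⟨s₀, hs₀⟩ := pers_exists hwidth hdir u₀
      have hlift : ∀ w : Λ, u₀ ≤ w → ∃ x, Pers T w x ∧ T.rtr u₀ x = s₀ := fun w hw =>
        pers_lift hwidth hdir hs₀ hw
      let r : Λ → α := fun w => if h : u₀ ≤ w then (hlift w h).choose else s₀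
      have hr : ∀ w (h : u₀ ≤ w), Pers T w (r w) ∧ T.rtr u₀ (r w) = s₀ := by
        intro w h
        simp only [r, dif_pos h]
        exact (hlift w h).choose_spec
      have huniq : ∀ w (h : u₀ ≤ w) (x : α), Pers T w x → T.rtr u₀ x = s₀ → x = r w :=
        fun w h x hx hxs => hinj w h x (r w) hx (hr w h).1 (by rw [hxs, (hr w h).2])
      have hcoh : ∀ w w', u₀ ≤ w → w ≤ w' → T.rtr w (r w') = r w := by
        intro w w' h hww'
        have h' : u₀ ≤ w' := h.trans hww'
        refine huniq w h _ (pers_rtr hwidth hdir (hr w' h').1 hww') ?_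
        rw [rtr_rtr h hww' (hr w' h').1.1, (hr w' h').2]
      let C : Λ → Λ := fun v => (exists_ub_pair hwidth hdir v u₀).choose
      have hC : ∀ v, v ≤ C v ∧ u₀ ≤ C v := fun v =>
        (exists_ub_pair hwidth hdir v u₀).choose_spec
      let b : Λ → α := fun v => T.rtr v (r (C v))
      have hbmem : ∀ v, b v ∈ T.lev v := fun v => mem_rtr (hC v).1 (hr (C v) (hC v).2).1.1
      have hblift : ∀ v w, v ≤ w → u₀ ≤ w → T.rtr v (r w) = b v := by
        intro v w hvw hu₀w
        obtain ⟨w', hww', hCw'⟩ := exists_ub_pair hwidth hdir w (C v)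
        have hu₀w' : u₀ ≤ w' := hu₀w.trans hww'
        have hm : r w' ∈ T.lev w' := (hr w' hu₀w').1.1
        calc T.rtr v (r w) = T.rtr v (T.rtr w (r w')) := by rw [hcoh w w' hu₀w hww']
          _ = T.rtr v (r w') := rtr_rtr hvw hww' hm
          _ = T.rtr v (T.rtr (C v) (r w')) := (rtr_rtr (hC v).1 hCw' hm).symm
          _ = b v := by rw [hcoh (C v) w' (hC v).2 hCw']
      refine ⟨b, hbmem, fun u v huv => ?_⟩
      obtain ⟨w, hvw, hu₀w⟩ := exists_ub_pair hwidth hdir v u₀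
      have hm : r w ∈ T.lev w := (hr w hu₀w).1.1
      have hkey : T.rtr u (b v) = b u := by
        rw [← hblift v w hvw hu₀w, rtr_rtr huv.le hvw hm, hblift u w (huv.le.trans hvw) hu₀w]
      rw [← hkey]
      exact rtr_lt huv (hbmem v)
    · -- otherwise: derive a contradiction using a long chain and pigeonhole
      exfalso
      push_neg at hG
      choose FV hFV1 r₁ r₂ hp1 hp2 heq hne using hG
      have hstep : ∀ x : μ.ord.ToType, ∀ ih : (∀ y : μ.ord.ToType, y < x → Λ),
          ∃ w : Λ, ∀ z ∈ insert u₁ (Set.range fun y : Set.Iio x => FV (ih y.1 y.2)), z ≤ w := by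
        intro x ih
        refine exists_ub hwidth hdir ?_
        exact (card_insert_range_le hwidth hdir _).trans
          (add_one_le_mu hwidth hdir (Cardinal.mk_Iio_ord_toType x))
      let c : μ.ord.ToType → Λ :=
        WellFounded.fix wellFounded_lt (fun x ih => (hstep x ih).choose)
      have hprop : ∀ y x : μ.ord.ToType, y < x → FV (c y) ≤ c x := by
        intro y x hyx
        have hfix : c x = (hstep x (fun z _ => c z)).choose :=
          WellFounded.fix_eq _ _ x
        rw [hfix]
        exact (hstep x (fun z _ => c z)).choose_spec (FV (c y))
          (Set.mem_insert_of_mem _ ⟨⟨y, hyx⟩, rfl⟩)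
      obtain ⟨us, hus⟩ := exists_ub hwidth hdir
        (S := Set.range fun x : μ.ord.ToType => FV (c x))
        (Cardinal.mk_range_le.trans (le_of_eq (by rw [Cardinal.mk_toType, Cardinal.card_ord])))
      have hFVus : ∀ x, FV (c x) ≤ us := fun x => hus _ ⟨x, rfl⟩
      have h1 : ∀ x : μ.ord.ToType, ∃ z, Pers T us z ∧ T.rtr (FV (c x)) z = r₁ (c x) :=
        fun x => pers_lift hwidth hdir (hp1 (c x)) (hFVus x)
      have h2 : ∀ x : μ.ord.ToType, ∃ z, Pers T us z ∧ T.rtr (FV (c x)) z = r₂ (c x) :=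
        fun x => pers_lift hwidth hdir (hp2 (c x)) (hFVus x)
      choose g₁ hg₁p hg₁e using h1
      choose g₂ hg₂p hg₂e using h2
      set P : Set α := {z | Pers T us z} with hP
      let φ : μ.ord.ToType → ↥P × ↥P := fun x => (⟨g₁ x, hg₁p x⟩, ⟨g₂ x, hg₂p x⟩)
      have hcard : #(↥P × ↥P) < μ := by
        have hPle : #P ≤ #(T.lev us) := Cardinal.mk_le_mk_of_subset (fun z hz => hz.1)
        have hPμ : #P < μ := hPle.trans_lt (hwidth us)
        simp only [Cardinal.mk_prod, Cardinal.lift_id]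
        calc #P * #P ≤ max #P ℵ₀ * max #P ℵ₀ := by
              gcongr <;> exact le_max_left _ _
          _ = max #P ℵ₀ := Cardinal.mul_eq_self (le_max_right _ _)
          _ < μ := max_lt hPμ haleph
      have hninj : ¬ Function.Injective φ := by
        intro hinj
        have hle := Cardinal.mk_le_of_injective hinj
        rw [Cardinal.mk_toType, Cardinal.card_ord] at hle
        exact absurd hle (not_le_of_gt hcard)
      obtain ⟨x, y, hfeq, hxy⟩ := Function.not_injective_iff.1 hninj
      have main : ∀ x y : μ.ord.ToType, x < y → φ x = φ y → False := by
        intro x y hxy hfeq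
        have e1 : g₁ x = g₁ y := congrArg (fun p => (p.1 : α)) hfeq
        have e2 : g₂ x = g₂ y := congrArg (fun p => (p.2 : α)) hfeq
        have hcy : c y ≤ FV (c y) := hFV1 (c y)
        have hcyus : c y ≤ us := hcy.trans (hFVus y)
        have hm1 : g₁ y ∈ T.lev us := (hg₁p y).1
        have hm2 : g₂ y ∈ T.lev us := (hg₂p y).1
        have hcol : T.rtr (c y) (g₁ y) = T.rtr (c y) (g₂ y) := by
          rw [← rtr_rtr hcy (hFVus y) hm1, ← rtr_rtr hcy (hFVus y) hm2, hg₁e y, hg₂e y]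
          exact heq (c y)
        have hle : FV (c x) ≤ c y := hprop x y hxy
        apply hne (c x)
        rw [← hg₁e x, ← hg₂e x, e1, e2]
        calc T.rtr (FV (c x)) (g₁ y)
            = T.rtr (FV (c x)) (T.rtr (c y) (g₁ y)) := (rtr_rtr hle hcyus hm1).symm
          _ = T.rtr (FV (c x)) (T.rtr (c y) (g₂ y)) := by rw [hcol]
          _ = T.rtr (FV (c x)) (g₂ y) := rtr_rtr hle hcyus hm2
      rcases hxy.lt_or_gt with h | h
      · exact main x y h hfeq
      · exact main y x h hfeq.symm
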